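/- Let M be a cyclic unital comp module over a multiplicative operad (O, μ). The cap product i_f(x) := (μ ∘_2 f) •_0 x satisfies i_f i_g = i_{f ⌣ g} for all f ∈ O^m, g ∈ O^n, where f ⌣ g = (μ ∘_2 f) ∘_1 g. -/

import Mathlib

open Finset

/-- A non-symmetric unital operad in `k`-modules, presented with an ambient module `A`
whose graded pieces `piece n` play the role of `O^n`, partial compositions
`comp f g i` (denoted `f ∘ᵢ g`, declared to vanish for out-of-range data), and a unit. -/
structure NSOperad (k A : Type) [CommRing k] [AddCommGroup A] [Module k A] where
  piece : ℕ → Submodule k A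
  comp : A → A → ℕ → A
  one : A
  one_mem : one ∈ piece 1
  comp_mem : ∀ {n m : ℕ} {f g : A}, f ∈ piece n → g ∈ piece m → ∀ i : ℕ,
      comp f g i ∈ piece (n + m - 1)
  comp_add_left : ∀ (f f' g : A) (i : ℕ), comp (f + f') g i = comp f g i + comp f' g i
  comp_add_right : ∀ (f g g' : A) (i : ℕ), comp f (g + g') i = comp f g i + comp f g' i
  comp_smul_left : ∀ (c : k) (f g : A) (i : ℕ), comp (c • f) g i = c • comp f g i
  comp_smul_right : ∀ (c : k) (f g : A) (i : ℕ), comp f (c • g) i = c • comp f g i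
  comp_out_of_range : ∀ {n : ℕ} {f : A}, f ∈ piece n → ∀ (g : A) (i : ℕ),
      (n < i ∨ n = 0) → comp f g i = 0
  assoc₁ : ∀ {n m p : ℕ} {f g h : A}, f ∈ piece n → g ∈ piece m → h ∈ piece p →
      ∀ i j : ℕ, 1 ≤ j → j < i → i ≤ n →
      comp (comp f g i) h j = comp (comp f h j) g (i + p - 1)
  assoc₂ : ∀ {n m p : ℕ} {f g h : A}, f ∈ piece n → g ∈ piece m → h ∈ piece p →
      ∀ i j : ℕ, 1 ≤ i → i ≤ j → j < m + i →
      comp (comp f g i) h j = comp f (comp g h (j - i + 1)) i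
  assoc₃ : ∀ {n m p : ℕ} {f g h : A}, f ∈ piece n → g ∈ piece m → h ∈ piece p →
      ∀ i j : ℕ, 1 ≤ i → m + i ≤ j → j ≤ n + m - 1 →
      comp (comp f g i) h j = comp (comp f h (j - m + 1)) g i
  unit_right : ∀ {n : ℕ} {f : A}, f ∈ piece n → ∀ i : ℕ, 1 ≤ i → i ≤ n → comp f one i = f
  unit_left : ∀ f : A, comp one f 1 = f

variable {k A : Type} [CommRing k] [AddCommGroup A] [Module k A]

/-- The circle product `f ∘ g = ∑_{i=1}^n (-1)^{(i-1)(m-1)} f ∘ᵢ g` for `f ∈ O^n`, `g ∈ O^m`.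
(The sign exponent `(i+1)*(m+1)` has the same parity as `(i-1)(m-1)`.) -/
def NSOperad.circle (O : NSOperad k A) (n m : ℕ) (f g : A) : A :=
  ∑ i ∈ Finset.Icc 1 n, ((-1 : ℤ) ^ ((i + 1) * (m + 1))) • O.comp f g i

/-- A unital (left) comp module over a non-symmetric operad `O`, presented with an ambient
module `M` whose graded pieces `piece p` play the role of `M_p`, with action maps
`act f x i` (denoted `f •ᵢ x`), allowing the extra index `i = 0` of a para-cyclic structure. -/
structure CompModule (O : NSOperad k A) (M : Type) [AddCommGroup M] [Module k M] where
  piece : ℕ → Submodule k M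
  act : A → M → ℕ → M
  act_mem : ∀ {m p : ℕ} {f : A} {x : M}, f ∈ O.piece m → x ∈ piece p → ∀ i : ℕ,
      act f x i ∈ piece (p - m + 1)
  act_add_left : ∀ (f f' : A) (x : M) (i : ℕ), act (f + f') x i = act f x i + act f' x i
  act_add_right : ∀ (f : A) (x y : M) (i : ℕ), act f (x + y) i = act f x i + act f y i
  act_smul_left : ∀ (c : k) (f : A) (x : M) (i : ℕ), act (c • f) x i = c • act f x i
  act_smul_right : ∀ (c : k) (f : A) (x : M) (i : ℕ), act f (c • x) i = c • act f x i
  rel₁ : ∀ {m n p : ℕ} {f g : A} {x : M}, f ∈ O.piece m → g ∈ O.piece n → x ∈ piece p →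
      ∀ i j : ℕ, j < i → act f (act g x j) i = act g (act f x (i + n - 1)) j
  rel₂ : ∀ {m n p : ℕ} {f g : A} {x : M}, f ∈ O.piece m → g ∈ O.piece n → x ∈ piece p →
      ∀ i j : ℕ, (j : ℤ) - m < i → i ≤ j →
      act f (act g x j) i = act (O.comp f g (j - i + 1)) x i
  rel₃ : ∀ {m n p : ℕ} {f g : A} {x : M}, f ∈ O.piece m → g ∈ O.piece n → x ∈ piece p →
      ∀ i j : ℕ, (i : ℤ) ≤ (j : ℤ) - m → act f (act g x j) i = act g (act f x i) (j - m + 1)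
  unital : ∀ {p : ℕ} {x : M}, x ∈ piece p → ∀ i : ℕ, i ≤ p → act O.one x i = x

/-- A cyclic unital comp module over an operad `O`: a unital comp module (with the extra
index-`0` actions) together with a cyclic operator `t : M_p → M_p` satisfying
`t^{p+1} = id` and `t(f •ᵢ x) = f •ᵢ₊₁ t(x)`. -/
structure CyclicCompModule (O : NSOperad k A) (M : Type) [AddCommGroup M] [Module k M]
    extends CompModule O M where
  cyc : M → M
  cyc_add : ∀ x y : M, cyc (x + y) = cyc x + cyc y
  cyc_smul : ∀ (c : k) (x : M), cyc (c • x) = c • cyc x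
  cyc_mem : ∀ {p : ℕ} {x : M}, x ∈ piece p → cyc x ∈ piece p
  cyc_order : ∀ {p : ℕ} {x : M}, x ∈ piece p → cyc^[p + 1] x = x
  cyc_act : ∀ {m p : ℕ} {f : A} {x : M}, f ∈ O.piece m → x ∈ piece p →
      ∀ i : ℕ, i + m ≤ p → cyc (act f x i) = act f (cyc x) (i + 1)

/-- The cup product `f ⌣ g = (μ ∘₂ f) ∘₁ g`. -/
def NSOperad.cup (O : NSOperad k A) (μ f g : A) : A :=
  O.comp (O.comp μ f 2) g 1

/-- The cap product `i_f x = (μ ∘₂ f) •₀ x`. -/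
def CyclicCompModule.cap {M : Type} [AddCommGroup M] [Module k M] {O : NSOperad k A}
    (C : CyclicCompModule O M) (μ f : A) (x : M) : M :=
  C.act (O.comp μ f 2) x 0

/-- for a cyclic unital comp module `M` over a multiplicative operad
`(O, μ)`, the cap product satisfies `i_f ∘ i_g = i_{f ⌣ g}`. -/
theorem cap_cap_eq_cap_cup {M : Type} [AddCommGroup M] [Module k M]
    (O : NSOperad k A) {μ : A} (hμ : μ ∈ O.piece 2) (hmul : O.comp μ μ 1 = O.comp μ μ 2)
    (C : CyclicCompModule O M) {m n p : ℕ} {f g : A} {x : M}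
    (hf : f ∈ O.piece m) (hg : g ∈ O.piece n) (hx : x ∈ C.piece p) (hrange : m + n ≤ p) :
    C.cap μ f (C.cap μ g x) = C.cap μ (O.cup μ f g) x := by
  have hF : O.comp μ f 2 ∈ O.piece (m + 1) := by
    have h := O.comp_mem hμ hf 2
    rwa [show 2 + m - 1 = m + 1 from by omega] at h
  have hG : O.comp μ g 2 ∈ O.piece (n + 1) := by
    have h := O.comp_mem hμ hg 2
    rwa [show 2 + n - 1 = n + 1 from by omega] at h
  have hC : O.comp μ g 1 ∈ O.piece (n + 1) := by
    have h := O.comp_mem hμ hg 1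
    rwa [show 2 + n - 1 = n + 1 from by omega] at h
  -- the key operadic identity
  have key : O.comp (O.comp μ f 2) (O.comp μ g 2) 1
      = O.comp μ (O.cup μ f g) 2 := by
    have s1 := O.assoc₁ hμ hf hG 2 1 (by omega) (by omega) (by omega)
    rw [show 2 + (n + 1) - 1 = n + 2 from by omega] at s1
    have s2 := O.assoc₂ hμ hμ hg 1 2 (by omega) (by omega) (by omega)
    rw [show 2 - 1 + 1 = 2 from by omega] at s2
    have s4 := O.assoc₂ hμ hμ hg 2 2 (by omega) (by omega) (by omega)
    rw [show 2 - 2 + 1 = 1 from by omega] at s4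
    have s5 := O.assoc₂ hμ hC hf 2 (n + 2) (by omega) (by omega) (by omega)
    rw [show n + 2 - 2 + 1 = n + 1 from by omega] at s5
    have s6 := O.assoc₁ hμ hf hg 2 1 (by omega) (by omega) (by omega)
    rw [show 2 + n - 1 = n + 1 from by omega] at s6
    rw [s1, ← s2, hmul, s4, s5, NSOperad.cup, s6]
  rw [CyclicCompModule.cap, CyclicCompModule.cap, CyclicCompModule.cap,
    C.rel₂ hF hG hx 0 0 (by push_cast; omega) le_rfl,
    show (0 : ℕ) - 0 + 1 = 1 from by omega, key]
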